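/- Let α and β be elements of order 3 in the symmetric group S_6 that do not lie in a common Sylow 3-subgroup. Then either αβ or αβ² does not have order dividing 3 (equivalently, at least one of αβ, αβ² is not an element of order 3 or the identity). More precisely: (αβ)³ ≠ 1 or (αβ²)³ ≠ 1, i.e., not both αβ and αβ² have order dividing 3. -/
import Mathlib

section BurnsideAux

variable {G : Type*} [Group G]

private lemma aux_comm (a b : G) (hb : b*b*b = 1)
    (h1 : (a*b)*(a*b)*(a*b) = 1) (h2 : (a*b⁻¹)*(a*b⁻¹)*(a*b⁻¹) = 1) :
    (a⁻¹*b⁻¹*a*b)*a = a*(a⁻¹*b⁻¹*a*b) := by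
  have hbb : b⁻¹*b⁻¹ = b := by
    calc b⁻¹*b⁻¹ = (b*b*b)⁻¹ * b := by group
    _ = b := by rw [hb]; group
  have D1 : b*a = a⁻¹*b⁻¹*a⁻¹*b⁻¹ := by
    calc b*a = a⁻¹*((a*b)*(a*b)*(a*b))*(b⁻¹*a⁻¹*b⁻¹) := by group
    _ = a⁻¹*b⁻¹*a⁻¹*b⁻¹ := by rw [h1]; group
  have h3 : (a⁻¹*b)*(a⁻¹*b)*(a⁻¹*b) = 1 := by
    calc (a⁻¹*b)*(a⁻¹*b)*(a⁻¹*b) = b⁻¹ * ((a*b⁻¹)*(a*b⁻¹)*(a*b⁻¹))⁻¹ * b := by group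
    _ = 1 := by rw [h2]; group
  have D2 : (a⁻¹*b)*(a⁻¹*b) = b⁻¹*a := by
    calc (a⁻¹*b)*(a⁻¹*b) = ((a⁻¹*b)*(a⁻¹*b)*(a⁻¹*b))*(b⁻¹*a) := by group
    _ = b⁻¹*a := by rw [h3]; group
  calc (a⁻¹*b⁻¹*a*b)*a = a⁻¹*b⁻¹*a*(b*a) := by group
  _ = a⁻¹*b⁻¹*a*(a⁻¹*b⁻¹*a⁻¹*b⁻¹) := by rw [D1]
  _ = a⁻¹*(b⁻¹*b⁻¹)*(a⁻¹*b⁻¹) := by group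
  _ = a⁻¹*b*(a⁻¹*b⁻¹) := by rw [hbb]
  _ = (a⁻¹*b)*(a⁻¹*b)*(b⁻¹*b⁻¹) := by group
  _ = (b⁻¹*a)*(b⁻¹*b⁻¹) := by rw [D2]
  _ = (b⁻¹*a)*b := by rw [hbb]
  _ = a*(a⁻¹*b⁻¹*a*b) := by group

private lemma pow3eq (x : G) : x^3 = x*(x*x) := by
  rw [pow_succ, pow_succ, pow_one, mul_assoc]

private lemma pow3eq' (x : G) : x^3 = x*x*x := by
  rw [pow_succ, pow_succ, pow_one]

private lemma cube_one_of_closure (a b : G)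
    (ha : a^3 = 1) (hb : b^3 = 1) (h1 : (a*b)^3 = 1) (h2 : (a*b⁻¹)^3 = 1) :
    ∀ x ∈ Subgroup.closure ({a, b} : Set G), x^3 = 1 := by
  have ha' : a*a*a = 1 := by rw [← pow3eq']; exact ha
  have hb' : b*b*b = 1 := by rw [← pow3eq']; exact hb
  have h1' : (a*b)*(a*b)*(a*b) = 1 := by rw [← pow3eq']; exact h1
  have h2' : (a*b⁻¹)*(a*b⁻¹)*(a*b⁻¹) = 1 := by rw [← pow3eq']; exact h2
  set c := a⁻¹*b⁻¹*a*b with hc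
  have hcaC : Commute c a := aux_comm a b hb' h1' h2'
  have h1s : (b*a)*(b*a)*(b*a) = 1 := by
    calc (b*a)*(b*a)*(b*a) = a⁻¹*((a*b)*(a*b)*(a*b))*a := by group
    _ = 1 := by rw [h1']; group
  have h2s : (b*a⁻¹)*(b*a⁻¹)*(b*a⁻¹) = 1 := by
    calc (b*a⁻¹)*(b*a⁻¹)*(b*a⁻¹) = ((a*b⁻¹)*(a*b⁻¹)*(a*b⁻¹))⁻¹ := by group
    _ = 1 := by rw [h2']; group
  have hcbC : Commute c b := by
    have hd := aux_comm b a ha' h1s h2s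
    have hinv : Commute c⁻¹ b := by
      show c⁻¹ * b = b * c⁻¹
      have e : c⁻¹ = b⁻¹*a⁻¹*b*a := by rw [hc]; group
      rw [e]; exact hd
    exact Commute.inv_left_iff.mp hinv
  -- c^3 = 1
  have hbac : b*a = (a*b)*c⁻¹ := by rw [hc]; group
  have hcabC : Commute (a*b) c⁻¹ := ((hcaC.mul_right hcbC).symm).inv_right
  have hbas : (b*a)^3 = 1 := by rw [pow3eq']; exact h1s
  have hc3 : c^3 = 1 := by
    have : (a*b)^3 * (c⁻¹)^3 = 1 := by rw [← hcabC.mul_pow, ← hbac]; exact hbas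
    rw [h1, one_mul, inv_pow, inv_eq_one] at this
    exact this
  have hc2 : c^2 = c⁻¹ := by
    apply eq_inv_of_mul_eq_one_left
    rw [← pow_succ]; exact hc3
  set d := c^2 with hd
  have hd3 : d^3 = 1 := by
    rw [hd, ← pow_mul, show 2*3 = 3*2 from rfl, pow_mul, hc3, one_pow]
  have hdaC : Commute d a := hcaC.pow_left 2
  have hdbC : Commute d b := hcbC.pow_left 2
  have hba2 : b*a = a*b*d := by rw [hc2]; exact hbac
  have Rda' : ∀ (n i : ℕ) (t : G), d^n * (a^i * t) = a^i * (d^n * t) := by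
    intro n i t; rw [← mul_assoc, (hdaC.pow_pow n i).eq, mul_assoc]
  have Rdb' : ∀ (n j : ℕ) (t : G), d^n * (b^j * t) = b^j * (d^n * t) := by
    intro n j t; rw [← mul_assoc, (hdbC.pow_pow n j).eq, mul_assoc]
  have L1 : ∀ i : ℕ, b * a^i = a^i * (b * d^i) := by
    intro i
    induction i with
    | zero => simp
    | succ i ih =>
      calc b * a^(i+1) = (b * a^i) * a := by rw [pow_succ, ← mul_assoc]
      _ = (a^i * (b * d^i)) * a := by rw [ih]
      _ = a^i * (b * (d^i * a)) := by simp only [mul_assoc]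
      _ = a^i * (b * (a * d^i)) := by rw [(hdaC.pow_left i).eq]
      _ = a^i * ((b * a) * d^i) := by simp only [mul_assoc]
      _ = a^i * ((a * b * d) * d^i) := by rw [hba2]
      _ = a^(i+1) * (b * d^(i+1)) := by
          rw [pow_succ a, pow_succ' d]; simp only [mul_assoc]
  have L : ∀ (j i : ℕ), b^j * a^i = a^i * (b^j * d^(i*j)) := by
    intro j i
    induction j with
    | zero => simp
    | succ j ih =>
      calc b^(j+1) * a^i = b^j * (b * a^i) := by rw [pow_succ, mul_assoc]
      _ = b^j * (a^i * (b * d^i)) := by rw [L1]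
      _ = (b^j * a^i) * (b * d^i) := by rw [← mul_assoc]
      _ = (a^i * (b^j * d^(i*j))) * (b * d^i) := by rw [ih]
      _ = a^i * (b^j * ((d^(i*j) * b) * d^i)) := by simp only [mul_assoc]
      _ = a^i * (b^j * ((b * d^(i*j)) * d^i)) := by rw [(hdbC.pow_left (i*j)).eq]
      _ = a^(i) * (b^(j+1) * d^(i*(j+1))) := by
          rw [pow_succ b, Nat.mul_succ, pow_add]; simp only [mul_assoc]
  have L' : ∀ (j i : ℕ) (t : G), b^j * (a^i * t) = a^i * (b^j * (d^(i*j) * t)) := by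
    intro j i t
    rw [← mul_assoc, L, mul_assoc, mul_assoc]
  have Ma : ∀ (m n : ℕ) (t : G), a^m * (a^n * t) = a^(m+n) * t := by
    intro m n t; rw [← mul_assoc, ← pow_add]
  have Mb : ∀ (m n : ℕ) (t : G), b^m * (b^n * t) = b^(m+n) * t := by
    intro m n t; rw [← mul_assoc, ← pow_add]
  set N : ℕ → ℕ → ℕ → G := fun i j k => a^i * (b^j * d^k) with hN
  have Ncongr : ∀ {i i' j j' k k' : ℕ}, i = i' → j = j' → k = k' → N i j k = N i' j' k' := by
    intro i i' j j' k k' e1 e2 e3; rw [e1, e2, e3]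
  have mulF : ∀ i j k i' j' k', N i j k * N i' j' k' = N (i+i') (j+j') (i'*j + (k+k')) := by
    intro i j k i' j' k'
    simp only [hN]
    calc a^i * (b^j * d^k) * (a^i' * (b^j' * d^k'))
        = a^i * (b^j * (d^k * (a^i' * (b^j' * d^k')))) := by simp only [mul_assoc]
      _ = a^i * (b^j * (a^i' * (d^k * (b^j' * d^k')))) := by rw [Rda']
      _ = a^i * (b^j * (a^i' * (b^j' * (d^k * d^k')))) := by rw [Rdb']
      _ = a^i * (a^i' * (b^j * (d^(i'*j) * (b^j' * (d^k * d^k'))))) := by rw [L']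
      _ = a^i * (a^i' * (b^j * (b^j' * (d^(i'*j) * (d^k * d^k'))))) := by rw [Rdb']
      _ = a^(i+i') * (b^(j+j') * d^(i'*j + (k+k'))) := by
          rw [Ma, Mb, ← pow_add, ← pow_add]
  have cubeN : ∀ i j k, (N i j k)^3 = 1 := by
    intro i j k
    calc (N i j k)^3 = N i j k * (N i j k * N i j k) := pow3eq _
    _ = N (i+(i+i)) (j+(j+j)) ((i+i)*j + (k + (i*j + (k+k)))) := by rw [mulF, mulF]
    _ = N (3*i) (3*j) (3*(i*j+k)) := Ncongr (by ring) (by ring) (by ring)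
    _ = 1 := by
        simp only [hN]
        rw [pow_mul, pow_mul, pow_mul, ha, hb, hd3, one_pow, one_pow, one_pow,
          one_mul, one_mul]
  intro x hx
  have form : ∃ i j k : ℕ, x = N i j k := by
    induction hx using Subgroup.closure_induction with
    | mem y hy =>
      rcases hy with hy | hy
      · exact ⟨1, 0, 0, by simp [hN, hy]⟩
      · exact ⟨0, 1, 0, by simp [hN, Set.mem_singleton_iff.mp hy]⟩
    | one => exact ⟨0, 0, 0, by simp [hN]⟩
    | mul y z hy hz ihy ihz =>
      obtain ⟨i, j, k, rfl⟩ := ihy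
      obtain ⟨i', j', k', rfl⟩ := ihz
      exact ⟨_, _, _, mulF i j k i' j' k'⟩
    | inv y hy ihy =>
      obtain ⟨i, j, k, rfl⟩ := ihy
      have hinv : (N i j k)⁻¹ = N i j k * N i j k := by
        apply inv_eq_of_mul_eq_one_right
        rw [show N i j k * (N i j k * N i j k) = (N i j k)^3 from (pow3eq _).symm]
        exact cubeN i j k
      rw [hinv, mulF]
      exact ⟨_, _, _, rfl⟩
  obtain ⟨i, j, k, rfl⟩ := form
  exact cubeN i j k

end BurnsideAux

theorem stmt_13 (α β : Equiv.Perm (Fin 6))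
    (hα : orderOf α = 3) (hβ : orderOf β = 3)
    (h : ¬ ∃ P : Sylow 3 (Equiv.Perm (Fin 6)), α ∈ P ∧ β ∈ P) :
    (α * β) ^ 3 ≠ 1 ∨ (α * β ^ 2) ^ 3 ≠ 1 := by
  by_contra hcon
  push_neg at hcon
  obtain ⟨h1, h2⟩ := hcon
  apply h
  have ha : α^3 = 1 := by rw [← hα]; exact pow_orderOf_eq_one α
  have hb : β^3 = 1 := by rw [← hβ]; exact pow_orderOf_eq_one β
  have hb2 : β^2 = β⁻¹ := by
    apply eq_inv_of_mul_eq_one_left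
    rw [← pow_succ]; exact hb
  rw [hb2] at h2
  have key := cube_one_of_closure α β ha hb h1 h2
  have hP : IsPGroup 3 (Subgroup.closure ({α, β} : Set (Equiv.Perm (Fin 6)))) := by
    intro g
    refine ⟨1, ?_⟩
    have hg3 : (g : Equiv.Perm (Fin 6))^3 = 1 := key _ g.2
    ext1
    push_cast
    exact hg3
  obtain ⟨P, hP⟩ := hP.exists_le_sylow
  exact ⟨P, hP (Subgroup.subset_closure (Set.mem_insert _ _)),
    hP (Subgroup.subset_closure (Set.mem_insert_of_mem _ rfl))⟩
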